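/- Let n ≥ 3, k ≥ 0, and suppose the crown S_n^k contains a strict alternating cycle of size m (with m ≥ 2) among its incomparable pairs (a_i, b_j). Then m·n ≤ 2(n+k). -/

import Mathlib

namespace CrownPaper

/-- Indices of the crown `S_n^k` live in `ZMod (n+k)`. The minimal element `a_i` is
incomparable to the maximal element `b_j` iff `(j - i) mod (n+k) ≤ k`. -/
def Incomp (n k : ℕ) (i j : ZMod (n + k)) : Prop := (j - i).val ≤ k

/-- `a_i < b_j` in the crown `S_n^k` iff `(j - i) mod (n+k) > k`. -/
def CompLt (n k : ℕ) (i j : ZMod (n + k)) : Prop := k < (j - i).val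

/-- A pair `(a_i, b_j)` is recorded as its pair of indices. -/
abbrev Pair (n k : ℕ) := ZMod (n + k) × ZMod (n + k)

/-- `(a_i, b_j)` is an incomparable (critical) pair. -/
def IsIncPair (n k : ℕ) (p : Pair n k) : Prop := Incomp n k p.1 p.2

/-- Adjacency in the graph `G_n^k` of critical pairs: `(a_i,b_j)` and `(a_p,b_q)` are
adjacent iff `a_i < b_q` and `a_p < b_j` in `S_n^k`. -/
def Adj (n k : ℕ) (p q : Pair n k) : Prop :=
  CompLt n k p.1 q.2 ∧ CompLt n k q.1 p.2

/-- An independent set of critical pairs in `G_n^k`. -/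
def Indep (n k : ℕ) (S : Set (Pair n k)) : Prop :=
  (∀ p ∈ S, IsIncPair n k p) ∧ ∀ p ∈ S, ∀ q ∈ S, ¬ Adj n k p q

/-- A set of pairs is reversible when some linear extension of the crown (encoded as an
injective map into `ℕ` on the disjoint union `A ⊕ B` preserving all strict comparabilities
`a_i < b_j`) puts `a` above `b` for every pair `(a,b)` of the set. -/
def Reversible (n k : ℕ) (S : Set (Pair n k)) : Prop :=
  ∃ f : (ZMod (n + k)) ⊕ (ZMod (n + k)) → ℕ,
    Function.Injective f ∧
    (∀ i j : ZMod (n + k), CompLt n k i j → f (Sum.inl i) < f (Sum.inr j)) ∧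
    ∀ p ∈ S, f (Sum.inr p.2) < f (Sum.inl p.1)

section Aux

variable {n k m : ℕ}

/-- If `a_{x β}` is not below `b_{y α}`, then the cyclic distance from `y α` to `x β`
is zero or at least `n`. -/
private lemma aux_L1 (hn : 3 ≤ n) (x y : ZMod m → ZMod (n + k))
    (hstrict : ∀ α β : ZMod m, (CompLt n k (x α) (y β) ↔ β = α - 1))
    (α β : ZMod m) (h : α ≠ β - 1) :
    (x β - y α).val = 0 ∨ n ≤ (x β - y α).val := by
  haveI : NeZero (n + k) := ⟨by omega⟩
  have h1 : ¬ CompLt n k (x β) (y α) := fun hc => h ((hstrict β α).mp hc)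
  rw [CompLt, not_lt] at h1
  by_cases h0 : y α - x β = 0
  · left
    have hx : x β - y α = 0 := by rw [← neg_sub, h0, neg_zero]
    rw [hx, ZMod.val_zero]
  · right
    have hx : x β - y α = -(y α - x β) := by ring
    rw [hx, ZMod.neg_val, if_neg h0]
    have := ZMod.val_lt (y α - x β)
    omega

/-- The successor `x (β+1)` lies strictly within `n-1` past `y β`. -/
private lemma aux_fB (hn : 3 ≤ n) (x y : ZMod m → ZMod (n + k))
    (hstrict : ∀ α β : ZMod m, (CompLt n k (x α) (y β) ↔ β = α - 1)) (β : ZMod m) :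
    1 ≤ (x (β + 1) - y β).val ∧ (x (β + 1) - y β).val + k + 1 ≤ n + k := by
  haveI : NeZero (n + k) := ⟨by omega⟩
  have hc : CompLt n k (x (β + 1)) (y β) :=
    (hstrict (β + 1) β).mpr (by rw [add_sub_cancel_right])
  rw [CompLt] at hc
  have h0 : y β - x (β + 1) ≠ 0 := by
    intro h; rw [h, ZMod.val_zero] at hc; omega
  have hx : x (β + 1) - y β = -(y β - x (β + 1)) := by ring
  rw [hx, ZMod.neg_val, if_neg h0]
  have := ZMod.val_lt (y β - x (β + 1))
  omega

/-- No window of `n` cyclically consecutive positions contains three distinct `y`'s. -/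
private lemma aux_window3 (hn : 3 ≤ n) (x y : ZMod m → ZMod (n + k))
    (hstrict : ∀ α β : ZMod m, (CompLt n k (x α) (y β) ↔ β = α - 1))
    (p : ZMod (n + k)) (α β γ : ZMod m) (hαβ : α ≠ β) (hβγ : β ≠ γ)
    (hab : (y α - p).val < (y β - p).val)
    (hbc : (y β - p).val < (y γ - p).val)
    (hc : (y γ - p).val < n) : False := by
  haveI : NeZero (n + k) := ⟨by omega⟩
  obtain ⟨hF1, hF2⟩ := aux_fB hn x y hstrict β
  set a := (y α - p).val with hadef
  set b := (y β - p).val with hbdef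
  set c := (y γ - p).val with hcdef
  set F := (x (β + 1) - y β).val with hFdef
  have hcastF : ((F : ℕ) : ZMod (n + k)) = x (β + 1) - y β := ZMod.natCast_zmod_val _
  have hcasta : ((a : ℕ) : ZMod (n + k)) = y α - p := ZMod.natCast_zmod_val _
  have hcastb : ((b : ℕ) : ZMod (n + k)) = y β - p := ZMod.natCast_zmod_val _
  have hcastc : ((c : ℕ) : ZMod (n + k)) = y γ - p := ZMod.natCast_zmod_val _
  -- the element `x (β+1) - y α` is the cast of `F + (b - a)`
  have he1 : x (β + 1) - y α = ((F + (b - a) : ℕ) : ZMod (n + k)) := by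
    rw [Nat.cast_add, Nat.cast_sub hab.le, hcastF, hcasta, hcastb]; ring
  have hv1 : (x (β + 1) - y α).val = (F + (b - a)) % (n + k) := by
    rw [he1, ZMod.val_natCast]
  have key1 := aux_L1 hn x y hstrict α (β + 1)
    (by rw [add_sub_cancel_right]; exact hαβ)
  rw [hv1] at key1
  -- step 1 : n ≤ F + (b - a) ≤ n + k
  have step1 : n ≤ F + (b - a) ∧ F + (b - a) ≤ n + k := by
    rcases Nat.lt_or_ge (F + (b - a)) (n + k) with hlt | hge
    · rw [Nat.mod_eq_of_lt hlt] at key1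
      omega
    · have hmod : (F + (b - a)) % (n + k) = F + (b - a) - (n + k) := by
        rw [Nat.mod_eq_sub_mod hge, Nat.mod_eq_of_lt (by omega)]
      rw [hmod] at key1
      omega
  -- step 2 : consider `x (β+1) - y γ`
  have hle2 : c - a ≤ F + (b - a) := by omega
  have he2 : x (β + 1) - y γ = ((F + (b - a) - (c - a) : ℕ) : ZMod (n + k)) := by
    rw [Nat.cast_sub hle2, Nat.cast_add, Nat.cast_sub hab.le,
      Nat.cast_sub (by omega : a ≤ c), hcastF, hcasta, hcastb, hcastc]
    ring
  have hv2 : (x (β + 1) - y γ).val = F + (b - a) - (c - a) := by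
    rw [he2, ZMod.val_natCast, Nat.mod_eq_of_lt (by omega)]
  have key2 := aux_L1 hn x y hstrict γ (β + 1)
    (by rw [add_sub_cancel_right]; exact fun h => hβγ h.symm)
  rw [hv2] at key2
  omega

end Aux

/-- if the crown `S_n^k` contains a strict alternating cycle of size `m ≥ 2`
among its incomparable pairs, then `m·n ≤ 2(n+k)`. -/
theorem strictAltCycle_size_bound (n k m : ℕ) (hn : 3 ≤ n) (hm : 2 ≤ m)
    (x y : ZMod m → ZMod (n + k))
    (hinc : ∀ α : ZMod m, Incomp n k (x α) (y α))
    (hstrict : ∀ α β : ZMod m, (CompLt n k (x α) (y β) ↔ β = α - 1)) :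
    m * n ≤ 2 * (n + k) := by
  classical
  haveI : NeZero (n + k) := ⟨by omega⟩
  haveI : NeZero m := ⟨by omega⟩
  -- y is injective
  have yinj : Function.Injective y := by
    intro α β h
    have h1 : CompLt n k (x (α + 1)) (y α) :=
      (hstrict (α + 1) α).mpr (by rw [add_sub_cancel_right])
    rw [h] at h1
    have h2 := (hstrict (α + 1) β).mp h1
    rw [add_sub_cancel_right] at h2
    exact h2.symm
  -- every window of n consecutive positions contains at most 2 of the y's
  have hcard2 : ∀ p : ZMod (n + k),
      (Finset.univ.filter fun α : ZMod m => (y α - p).val < n).card ≤ 2 := by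
    intro p
    by_contra hlt
    rw [not_le] at hlt
    obtain ⟨α, hα, β, hβ, γ, hγ, hαβ, hαγ, hβγ⟩ := Finset.two_lt_card.mp hlt
    rw [Finset.mem_filter] at hα hβ hγ
    have hvalne : ∀ δ ε : ZMod m, δ ≠ ε → (y δ - p).val ≠ (y ε - p).val := by
      intro δ ε hne hv
      apply hne
      apply yinj
      have hcast := congrArg (Nat.cast : ℕ → ZMod (n + k)) hv
      rw [ZMod.natCast_zmod_val, ZMod.natCast_zmod_val] at hcast
      exact sub_left_inj.mp hcast
    have W : ∀ δ ε ζ : ZMod m, δ ≠ ε → ε ≠ ζ →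
        (y ζ - p).val < n →
        (y δ - p).val < (y ε - p).val → (y ε - p).val < (y ζ - p).val → False :=
      fun δ ε ζ h1 h2 hz h3 h4 => aux_window3 hn x y hstrict p δ ε ζ h1 h2 h3 h4 hz
    have nab := hvalne α β hαβ
    have nac := hvalne α γ hαγ
    have nbc := hvalne β γ hβγ
    rcases Nat.lt_or_ge (y α - p).val (y β - p).val with h1 | h1
    · rcases Nat.lt_or_ge (y β - p).val (y γ - p).val with h2 | h2
      · exact W α β γ hαβ hβγ hγ.2 h1 h2
      · rcases Nat.lt_or_ge (y α - p).val (y γ - p).val with h3 | h3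
        · exact W α γ β hαγ (fun h => hβγ h.symm) hβ.2 h3 (by omega)
        · exact W γ α β (fun h => hαγ h.symm) hαβ hβ.2 (by omega) h1
    · rcases Nat.lt_or_ge (y α - p).val (y γ - p).val with h2 | h2
      · exact W β α γ (fun h => hαβ h.symm) hαγ hγ.2 (by omega) h2
      · rcases Nat.lt_or_ge (y β - p).val (y γ - p).val with h3 | h3
        · exact W β γ α hβγ (fun h => hαγ h.symm) hα.2 h3 (by omega)
        · exact W γ β α (fun h => hβγ h.symm) (fun h => hαβ h.symm) hα.2 (by omega)
            (by omega)
  -- each y belongs to exactly n windows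
  have hrow : ∀ α : ZMod m,
      (Finset.univ.filter fun p : ZMod (n + k) => (y α - p).val < n).card = n := by
    intro α
    have h1 : (Finset.univ.filter fun p : ZMod (n + k) => (y α - p).val < n).card
        = (Finset.range n).card := by
      apply Finset.card_nbij' (fun p => (y α - p).val)
        (fun a => y α - ((a : ℕ) : ZMod (n + k)))
      · intro p hp
        rw [Finset.mem_coe, Finset.mem_range]
        exact (Finset.mem_filter.mp hp).2
      · intro a ha
        rw [Finset.mem_coe, Finset.mem_range] at ha
        rw [Finset.mem_coe, Finset.mem_filter]
        refine ⟨Finset.mem_univ _, ?_⟩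
        dsimp only
        have hx : y α - (y α - ((a : ℕ) : ZMod (n + k))) = ((a : ℕ) : ZMod (n + k)) := by
          ring
        rw [hx, ZMod.val_cast_of_lt (by omega : a < n + k)]
        exact ha
      · intro p _
        dsimp only
        rw [ZMod.natCast_zmod_val]
        ring
      · intro a ha
        rw [Finset.mem_coe, Finset.mem_range] at ha
        dsimp only
        have hx : y α - (y α - ((a : ℕ) : ZMod (n + k))) = ((a : ℕ) : ZMod (n + k)) := by
          ring
        rw [hx, ZMod.val_cast_of_lt (by omega : a < n + k)]
    rw [h1, Finset.card_range]
  -- double counting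
  have hdouble : ∑ α : ZMod m,
      (Finset.univ.filter fun p : ZMod (n + k) => (y α - p).val < n).card
      = ∑ p : ZMod (n + k),
        (Finset.univ.filter fun α : ZMod m => (y α - p).val < n).card := by
    simp_rw [Finset.card_filter]
    exact Finset.sum_comm
  have hleft : ∑ α : ZMod m,
      (Finset.univ.filter fun p : ZMod (n + k) => (y α - p).val < n).card = m * n := by
    rw [Finset.sum_congr rfl fun α _ => hrow α]
    rw [Finset.sum_const, Finset.card_univ, ZMod.card, smul_eq_mul]
  have hright : ∑ p : ZMod (n + k),
      (Finset.univ.filter fun α : ZMod m => (y α - p).val < n).card ≤ 2 * (n + k) := by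
    calc ∑ p : ZMod (n + k),
        (Finset.univ.filter fun α : ZMod m => (y α - p).val < n).card
        ≤ ∑ _p : ZMod (n + k), 2 := Finset.sum_le_sum fun p _ => hcard2 p
      _ = 2 * (n + k) := by
          rw [Finset.sum_const, Finset.card_univ, ZMod.card, smul_eq_mul, mul_comm]
  omega


end CrownPaper
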